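/- Let α, β ∈ ℝ and set a := e^{iα}/√2, b := e^{iβ}/√2, p := (0, a, b, 0) ∈ ℂ⁴, w₊ := (0, a, b, 0), w₋ := (0, a, −b, 0), and let e₁, e₂, e₃, e₄ be the canonical basis of ℂ⁴. Consider the coincidence measurement e_{AB} given by the orthonormal basis {e₁, e₂, e₃, e₄} (with w₁₁ = e₁, w₁₂ = e₂, w₂₁ = e₃, w₂₂ = e₄) and the coincidence measurement e_{AB'} given by the orthonormal basis {w₊, w₋, e₁, e₄} (with w'₁₁ = w₊, w'₁₂ = w₋, w'₂₁ = e₁, w'₂₂ = e₄). Then the marginal distribution law is violated in the state p: |⟨w₁₁, p⟩|² + |⟨w₁₂, p⟩|² = 1/2, while |⟨w'₁₁, p⟩|² + |⟨w'₁₂, p⟩|² = 1. -/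

import Mathlib

open scoped InnerProductSpace
open Matrix

noncomputable section

/-- `ℂ²` as a Hilbert space. -/
abbrev C2 : Type := EuclideanSpace ℂ (Fin 2)

/-- `ℂ⁴` as a Hilbert space. -/
abbrev C4 : Type := EuclideanSpace ℂ (Fin 4)

/-- Kronecker product of vectors: `(x ⊗ y)_(2i+j) = xᵢ · yⱼ`. -/
def vKron (x y : C2) : C4 :=
  (WithLp.equiv 2 (Fin 4 → ℂ)).symm fun k =>
    x (⟨k.val / 2, by omega⟩ : Fin 2) * y (⟨k.val % 2, by omega⟩ : Fin 2)

/-- Kronecker product of 2×2 matrices as a 4×4 matrix. -/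
def mKron (M N : Matrix (Fin 2) (Fin 2) ℂ) : Matrix (Fin 4) (Fin 4) ℂ :=
  Matrix.of fun i j =>
    M (⟨i.val / 2, by omega⟩ : Fin 2) (⟨j.val / 2, by omega⟩ : Fin 2) *
      N (⟨i.val % 2, by omega⟩ : Fin 2) (⟨j.val % 2, by omega⟩ : Fin 2)

/-- The rank-one matrix `u · uᴴ` (`uu*`). -/
def rankOne {n : ℕ} (u : EuclideanSpace ℂ (Fin n)) : Matrix (Fin n) (Fin n) ℂ :=
  Matrix.of fun i j => u i * star (u j)

/-- The vector `(a, b, c, d) ∈ ℂ⁴`. -/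
def vec4 (a b c d : ℂ) : C4 :=
  (WithLp.equiv 2 (Fin 4 → ℂ)).symm ![a, b, c, d]

/-- In the nonlocal non-marginal box model, the marginal distribution law is violated in
the state `p = (0, e^{iα}/√2, e^{iβ}/√2, 0)`: for the coincidence measurement `e_{AB}`
with basis `{e₁,e₂,e₃,e₄}` (with `w₁₁ = e₁`, `w₁₂ = e₂`) and the coincidence measurement
`e_{AB'}` with basis `{w₊, w₋, e₁, e₄}` (with `w'₁₁ = w₊`, `w'₁₂ = w₋`), one has
`|⟨w₁₁, p⟩|² + |⟨w₁₂, p⟩|² = 1/2` while `|⟨w'₁₁, p⟩|² + |⟨w'₁₂, p⟩|² = 1`. -/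
theorem stmt_10 (α β : ℝ) (a b : ℂ)
    (ha : a = Complex.exp (α * Complex.I) / Real.sqrt 2)
    (hb : b = Complex.exp (β * Complex.I) / Real.sqrt 2)
    (p wp wm e1 e2 e3 e4 : C4)
    (hp : p = vec4 0 a b 0) (hwp : wp = vec4 0 a b 0) (hwm : wm = vec4 0 a (-b) 0)
    (he1 : e1 = vec4 1 0 0 0) (he2 : e2 = vec4 0 1 0 0)
    (he3 : e3 = vec4 0 0 1 0) (he4 : e4 = vec4 0 0 0 1) :
    ‖⟪e1, p⟫_ℂ‖ ^ 2 + ‖⟪e2, p⟫_ℂ‖ ^ 2 = 1 / 2 ∧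
      ‖⟪wp, p⟫_ℂ‖ ^ 2 + ‖⟪wm, p⟫_ℂ‖ ^ 2 = 1 := by
  have hna : ‖a‖ ^ 2 = 1 / 2 := by
    rw [ha, norm_div, Complex.norm_exp_ofReal_mul_I]
    rw [Complex.norm_real, Real.norm_of_nonneg (Real.sqrt_nonneg 2)]
    rw [div_pow, one_pow, Real.sq_sqrt] <;> norm_num
  have hnb : ‖b‖ ^ 2 = 1 / 2 := by
    rw [hb, norm_div, Complex.norm_exp_ofReal_mul_I]
    rw [Complex.norm_real, Real.norm_of_nonneg (Real.sqrt_nonneg 2)]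
    rw [div_pow, one_pow, Real.sq_sqrt] <;> norm_num
  have hz : ∀ z : ℂ, (starRingEnd ℂ) z * z = ((‖z‖ : ℝ) : ℂ) ^ 2 := fun z => by
    rw [mul_comm, Complex.mul_conj']
  have key : (starRingEnd ℂ) a * a + (starRingEnd ℂ) b * b = 1 := by
    rw [hz, hz]; norm_cast; rw [hna, hnb]; norm_num
  subst hp hwp hwm he1 he2 he3 he4
  constructor
  · simp [vec4, PiLp.inner_apply, Fin.sum_univ_four, hna]
  · simp only [vec4, PiLp.inner_apply, Fin.sum_univ_four, WithLp.equiv_symm_apply, PiLp.toLp_apply,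
      Matrix.cons_val_zero, Matrix.cons_val_one, Matrix.head_cons, Matrix.cons_val_two,
      Matrix.tail_cons, Matrix.cons_val_three, map_zero, zero_mul, mul_zero, add_zero,
      zero_add, map_neg, neg_mul, RCLike.inner_apply]
    simp only [mul_comm _ ((starRingEnd ℂ) _), mul_neg]
    rw [key]
    have key2 : (starRingEnd ℂ) a * a + -((starRingEnd ℂ) b * b) = 0 := by
      rw [hz, hz]; norm_cast; rw [hna, hnb]; ring
    rw [key2]
    norm_num
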